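/- If X̂ is SDP-1-feasible, then ‖X₀ − X̂‖₁ ≤ 2 · Σ_{k=1}^{r} Σ_{i ∈ C̃_k} Σ_{j ∈ C̃_k} (1 − X̂_{ij}). -/

import Mathlib

open Matrix

/-- The entrywise ℓ¹ norm of a matrix: `‖M‖₁ = Σ_{i,j} |M_{ij}|`. -/
def l1Norm {n : ℕ} (M : Matrix (Fin n) (Fin n) ℝ) : ℝ := ∑ i, ∑ j, |M i j|

/-- A matrix `X ∈ ℝ^{n×n}` is SDP-1-feasible if it is symmetric positive semidefinite,
entrywise nonnegative, has all row sums equal to `n/r`, and has unit diagonal. -/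
def SDPFeasible (n r : ℕ) (X : Matrix (Fin n) (Fin n) ℝ) : Prop :=
  X.PosSemidef ∧ (∀ i j, 0 ≤ X i j) ∧ (∀ i, ∑ j, X i j = (n : ℝ) / r) ∧ (∀ i, X i i = 1)

lemma entry_le_one {n : ℕ} (X : Matrix (Fin n) (Fin n) ℝ) (h : X.PosSemidef)
    (hd : ∀ i, X i i = 1) (i j : Fin n) : X i j ≤ 1 := by
  rcases eq_or_ne i j with rfl | hij
  · exact (hd i).le
  · have h2 := h.dotProduct_mulVec_nonneg (Pi.single i 1 - Pi.single j 1)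
    have hji : X i j = X j i := by
      simpa using (congrFun (congrFun h.1 i) j).symm
    simp only [Matrix.mulVec_sub, dotProduct_sub, sub_dotProduct,
      Matrix.mulVec_single, dotProduct, Pi.sub_apply, Pi.star_apply,
      star_trivial, Pi.single_apply] at h2
    simp only [sub_mul, mul_sub, Finset.sum_sub_distrib, ite_mul, mul_ite, one_mul, mul_one,
      zero_mul, mul_zero, Finset.sum_ite_eq', Finset.sum_ite_eq, Finset.mem_univ, if_true,
      Pi.smul_apply, MulOpposite.op_one, one_smul, Matrix.col_apply] at h2
    rw [hd i, hd j, ← hji] at h2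
    linarith

/-- if `X̂` is SDP-1-feasible, then
`‖X₀ − X̂‖₁ ≤ 2 · Σ_{k=1}^{r} Σ_{i ∈ C̃_k} Σ_{j ∈ C̃_k} (1 − X̂_{ij})`. -/
theorem stmt_6 (n r : ℕ) (hdvd : r ∣ n)
    (z : Fin n → Fin r)
    (hsize : ∀ k : Fin r, (Finset.univ.filter fun i => z i = k).card = n / r)
    (Z : Matrix (Fin n) (Fin r) ℝ)
    (hZ : Z = Matrix.of (fun i k => if z i = k then (1 : ℝ) else 0))
    (X₀ : Matrix (Fin n) (Fin n) ℝ) (hX₀ : X₀ = Z * Zᵀ)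
    (Xh : Matrix (Fin n) (Fin n) ℝ) (hfeas : SDPFeasible n r Xh) :
    l1Norm (X₀ - Xh) ≤
      2 * ∑ k : Fin r, ∑ i ∈ Finset.univ.filter (fun i => z i = k),
        ∑ j ∈ Finset.univ.filter (fun j => z j = k), (1 - Xh i j) := by
  obtain ⟨hpsd, hnn, hrow, hdiag⟩ := hfeas
  rcases Nat.eq_zero_or_pos n with hn | hn
  · subst hn
    simp [l1Norm]
  have hr : r ≠ 0 := by rintro rfl; exact absurd (z ⟨0, hn⟩).2 (by simp)
  have hcast : ((n / r : ℕ) : ℝ) = (n : ℝ) / r :=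
    Nat.cast_div hdvd (by exact_mod_cast hr)
  have hle : ∀ i j, Xh i j ≤ 1 := entry_le_one Xh hpsd hdiag
  have hX0' : ∀ i j, X₀ i j = if z j = z i then 1 else 0 := by
    intro i j
    simp only [hX₀, hZ, Matrix.mul_apply, Matrix.transpose_apply, Matrix.of_apply,
      ite_mul, one_mul, zero_mul, mul_ite, mul_one, mul_zero]
    rcases eq_or_ne (z j) (z i) with h | h
    · rw [if_pos h, Finset.sum_eq_single (z i)]
      · simp [h]
      · intro b _ hb
        simp [hb, Ne.symm hb]
      · simp
    · rw [if_neg h]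
      apply Finset.sum_eq_zero
      intro k _
      rcases eq_or_ne (z i) k with rfl | hk
      · simp [h]
      · simp [hk]
  have hRHS : ∑ k : Fin r, ∑ i ∈ Finset.univ.filter (fun i => z i = k),
        ∑ j ∈ Finset.univ.filter (fun j => z j = k), (1 - Xh i j)
      = ∑ i, ∑ j ∈ Finset.univ.filter (fun j => z j = z i), (1 - Xh i j) := by
    rw [← Finset.sum_fiberwise Finset.univ z
      (fun i => ∑ j ∈ Finset.univ.filter (fun j => z j = z i), (1 - Xh i j))]
    refine Finset.sum_congr rfl fun k _ => Finset.sum_congr rfl fun i hi => ?_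
    rw [Finset.mem_filter] at hi
    rw [hi.2]
  rw [hRHS, l1Norm, Finset.mul_sum]
  apply le_of_eq
  refine Finset.sum_congr rfl fun i _ => ?_
  have hsplit := Finset.sum_filter_add_sum_filter_not Finset.univ (fun j => z j = z i)
    (fun j => |(X₀ - Xh) i j|)
  have eP : ∑ j ∈ Finset.univ.filter (fun j => z j = z i), |(X₀ - Xh) i j|
      = ∑ j ∈ Finset.univ.filter (fun j => z j = z i), (1 - Xh i j) := by
    refine Finset.sum_congr rfl fun j hj => ?_
    rw [Finset.mem_filter] at hj
    rw [Matrix.sub_apply, hX0' i j, if_pos hj.2, abs_of_nonneg (by linarith [hle i j])]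
  have eQ : ∑ j ∈ Finset.univ.filter (fun j => ¬ z j = z i), |(X₀ - Xh) i j|
      = ∑ j ∈ Finset.univ.filter (fun j => ¬ z j = z i), Xh i j := by
    refine Finset.sum_congr rfl fun j hj => ?_
    rw [Finset.mem_filter] at hj
    rw [Matrix.sub_apply, hX0' i j, if_neg hj.2, zero_sub, abs_neg,
      abs_of_nonneg (hnn i j)]
  have h1 : ∑ j ∈ Finset.univ.filter (fun j => z j = z i), Xh i j
      + ∑ j ∈ Finset.univ.filter (fun j => ¬ z j = z i), Xh i j = (n : ℝ) / r := by
    rw [Finset.sum_filter_add_sum_filter_not]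
    exact hrow i
  have h2 : ∑ j ∈ Finset.univ.filter (fun j => z j = z i), (1 - Xh i j)
      = (n : ℝ) / r - ∑ j ∈ Finset.univ.filter (fun j => z j = z i), Xh i j := by
    rw [Finset.sum_sub_distrib, Finset.sum_const, hsize (z i), nsmul_eq_mul, mul_one, hcast]
  rw [← hsplit, eP, eQ]
  linarith
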